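/- Let n be a positive integer. If 2n − 1 divides n³(n³ + 1)/2, then n = 1, n = 2, or n = 5. -/

import Mathlib

open SimpleGraph Finset

/-- A walk in `G` is a *geodesic walk* if it is a nontrivial path whose length equals
the distance in `G` between its endpoints. -/
def SimpleGraph.IsGeodesicWalk {V : Type*} (G : SimpleGraph V) {u v : V}
    (p : G.Walk u v) : Prop :=
  p.IsPath ∧ p.length = G.dist u v ∧ 0 < p.length

/-- The geodesic paths of `G`, where a path and its reverse are identified by
recording the (finite) set of edges of the path.  (A nontrivial path is determined,
up to reversal, by its edge set.) -/
def SimpleGraph.geodesicPathSets {V : Type*} [DecidableEq V] (G : SimpleGraph V) :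
    Set (Finset (Sym2 V)) :=
  {S | ∃ (u v : V) (p : G.Walk u v), G.IsGeodesicWalk p ∧ p.edges.toFinset = S}

/-- The geodesic path number `t_gp(G)`: the number of geodesic paths of `G`. -/
noncomputable def SimpleGraph.tgp {V : Type*} [DecidableEq V] (G : SimpleGraph V) : ℕ :=
  G.geodesicPathSets.ncard

/-- `f` is a geodesic Leech labeling of `G`: an edge labeling by positive integers such
that the weights of the geodesic paths of `G` are exactly `1, 2, …, t_gp(G)`,
each occurring exactly once. -/
def SimpleGraph.IsGeodesicLeechLabeling {V : Type*} [DecidableEq V] (G : SimpleGraph V)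
    (f : Sym2 V → ℕ) : Prop :=
  (∀ e ∈ G.edgeSet, 1 ≤ f e) ∧
    Set.BijOn (fun S => ∑ e ∈ S, f e) G.geodesicPathSets (Set.Icc 1 G.tgp)

/-- If `n` is a positive integer and `2n - 1` divides `n^3(n^3+1)/2`, then `n = 1`,
`n = 2`, or `n = 5`. -/
theorem statement_14 (n : ℕ) (hn : 0 < n)
    (h : 2 * n - 1 ∣ n ^ 3 * (n ^ 3 + 1) / 2) :
    n = 1 ∨ n = 2 ∨ n = 5 := by
  set m := n ^ 3 * (n ^ 3 + 1) / 2 with hm_def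
  have heven : 2 ∣ n ^ 3 * (n ^ 3 + 1) := (Nat.even_mul_succ_self (n ^ 3)).two_dvd
  have hm : 2 * m = n ^ 3 * (n ^ 3 + 1) := Nat.mul_div_cancel' heven
  have hcast : (2 * (n : ℤ) - 1) ∣ (m : ℤ) := by
    have := Int.natCast_dvd_natCast.mpr h
    have h1 : ((2 * n - 1 : ℕ) : ℤ) = 2 * (n : ℤ) - 1 := by
      have : 1 ≤ 2 * n := by omega
      push_cast [this]; ring
    rwa [h1] at this
  have hmz : 2 * (m : ℤ) = (n : ℤ) ^ 3 * ((n : ℤ) ^ 3 + 1) := by exact_mod_cast hm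
  have h9 : (2 * (n : ℤ) - 1) ∣ 9 := by
    have h1 : (2 * (n : ℤ) - 1) ∣ 128 * (m : ℤ) := hcast.mul_left 128
    have h2 : (2 * (n : ℤ) - 1) ∣ (128 * (m : ℤ) - 9) := by
      refine ⟨32 * (n:ℤ)^5 + 16 * (n:ℤ)^4 + 8 * (n:ℤ)^3 + 36 * (n:ℤ)^2 + 18 * (n:ℤ) + 9, ?_⟩
      linear_combination 64 * hmz
    have := h1.sub h2
    simpa using this
  have hle : 2 * (n : ℤ) - 1 ≤ 9 := Int.le_of_dvd (by norm_num) h9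
  have hn5 : n ≤ 5 := by exact_mod_cast by omega
  interval_cases n
  all_goals norm_num at h9
  all_goals norm_num
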